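/- For all communication trees u and w, u ⊑ᵣ w if and only if for every n : ℕ, ⌊u⌋ₙ ⊑ᵣ w. In other words, simulation is determined by all finite truncations of the left-hand side. -/

import Mathlib

/-! Coinductive communication trees, realized as the M-type of a polynomial
functor, together with the coinductively defined simulation relation. -/

/-- Shapes of nodes of communication trees. -/
inductive CommShape (V L : Type) : Type where
  | bot : CommShape V L
  | close : CommShape V L
  | label (k : L) : CommShape V L
  | pair : CommShape V L
  | val (f : V) : CommShape V L

/-- Arities: `bot` and `close` have no children, `label` and `val` have one,
`pair` has two. -/
def commArity (V L : Type) : CommShape V L → Type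
  | .bot => Empty
  | .close => Empty
  | .label _ => Unit
  | .pair => Bool
  | .val _ => Unit

/-- The polynomial functor of communication trees. -/
def CommP (V L : Type) : PFunctor := ⟨CommShape V L, commArity V L⟩

/-- The coinductive type of (possibly infinite) communication trees. -/
def Comm (V L : Type) : Type := (CommP V L).M

namespace Comm

variable {V L : Type}

/-- The empty communication. -/
def bot : Comm V L := PFunctor.M.mk ⟨CommShape.bot, Empty.elim⟩

/-- The close message. -/
def close : Comm V L := PFunctor.M.mk ⟨CommShape.close, Empty.elim⟩

/-- A label followed by a continuation. -/
def label (k : L) (v : Comm V L) : Comm V L :=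
  PFunctor.M.mk ⟨CommShape.label k, fun _ => v⟩

/-- A pair of communications (channel transmission). -/
def pair (v v' : Comm V L) : Comm V L :=
  PFunctor.M.mk ⟨CommShape.pair, fun b : Bool => if b then v else v'⟩

/-- A functional value followed by a continuation. -/
def val (f : V) (v : Comm V L) : Comm V L :=
  PFunctor.M.mk ⟨CommShape.val f, fun _ => v⟩

/-- One unfolding of the simulation relation: the clauses defining simulation. -/
def SimStep (R : V → V → Prop) (S : Comm V L → Comm V L → Prop)
    (u w : Comm V L) : Prop :=
  u = Comm.bot ∨
  (u = Comm.close ∧ w = Comm.close) ∨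
  (∃ k v v', u = Comm.label k v ∧ w = Comm.label k v' ∧ S v v') ∨
  (∃ a b a' b', u = Comm.pair a b ∧ w = Comm.pair a' b' ∧ S a a' ∧ S b b') ∨
  (∃ f g v v', u = Comm.val f v ∧ w = Comm.val g v' ∧ R f g ∧ S v v')

/-- Simulation modulo `R`: the largest relation closed under the clauses of
`SimStep`, i.e. the union of all post-fixed points. -/
def Sim (R : V → V → Prop) (u w : Comm V L) : Prop :=
  ∃ S : Comm V L → Comm V L → Prop, (∀ a b, S a b → SimStep R S a b) ∧ S u w

/-- The height-`n` truncation of a communication tree. -/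
def trunc : ℕ → Comm V L → Comm V L
  | 0, _ => Comm.bot
  | n + 1, w =>
    match PFunctor.M.dest w with
    | ⟨CommShape.bot, _⟩ => Comm.bot
    | ⟨CommShape.close, _⟩ => Comm.close
    | ⟨CommShape.label k, f⟩ => Comm.label k (trunc n (f ()))
    | ⟨CommShape.pair, f⟩ => Comm.pair (trunc n (f true)) (trunc n (f false))
    | ⟨CommShape.val g, f⟩ => Comm.val g (trunc n (f ()))

variable {V L : Type} {R : V → V → Prop}

theorem mk_inj {x y : (CommP V L).Obj (Comm V L)}
    (h : PFunctor.M.mk x = PFunctor.M.mk y) : x = y := by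
  have := congrArg PFunctor.M.dest h
  exact (PFunctor.M.dest_mk x).symm.trans (this.trans (PFunctor.M.dest_mk y))

theorem shape_of_eq {x y : (CommP V L).Obj (Comm V L)}
    (h : PFunctor.M.mk x = PFunctor.M.mk y) : x.1 = y.1 :=
  congrArg Sigma.fst (mk_inj h)

theorem label_inj {k k' : L} {v v' : Comm V L} (h : label k v = label k' v') :
    k = k' ∧ v = v' := by
  have h2 := mk_inj h
  injection h2 with h3 h4
  cases h3
  exact ⟨rfl, congrFun h4 ()⟩

theorem pair_inj {a b a' b' : Comm V L} (h : pair a b = pair a' b') :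
    a = a' ∧ b = b' := by
  have h2 := mk_inj h
  injection h2 with h3 h4
  have ht := congrFun h4 true
  have hf := congrFun h4 false
  simp only [if_true] at ht
  simp only [Bool.false_eq_true, if_false] at hf
  exact ⟨ht, hf⟩

theorem val_inj {f g : V} {v v' : Comm V L} (h : val f v = val g v') :
    f = g ∧ v = v' := by
  have h2 := mk_inj h
  injection h2 with h3 h4
  cases h3
  exact ⟨rfl, congrFun h4 ()⟩

/-- eta for bot -/
theorem mk_bot (f : Empty → Comm V L) :
    PFunctor.M.mk ⟨CommShape.bot, f⟩ = (bot : Comm V L) := by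
  rw [bot]; congr; funext x; exact x.elim

theorem mk_close (f : Empty → Comm V L) :
    PFunctor.M.mk ⟨CommShape.close, f⟩ = (close : Comm V L) := by
  rw [close]; congr; funext x; exact x.elim

theorem mk_label (k : L) (f : Unit → Comm V L) :
    PFunctor.M.mk ⟨CommShape.label k, f⟩ = label k (f ()) := by
  rw [label]
  exact congrArg PFunctor.M.mk (congrArg (Sigma.mk _) (funext fun x => rfl))

theorem mk_pair (f : Bool → Comm V L) :
    PFunctor.M.mk ⟨CommShape.pair, f⟩ = pair (f true) (f false) := by
  rw [pair]; congr; funext b; cases b <;> rfl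

theorem mk_val (g : V) (f : Unit → Comm V L) :
    PFunctor.M.mk ⟨CommShape.val g, f⟩ = val g (f ()) := by
  rw [val]
  exact congrArg PFunctor.M.mk (congrArg (Sigma.mk _) (funext fun x => rfl))

theorem cases' (u : Comm V L) :
    u = bot ∨ u = close ∨ (∃ k v, u = label k v) ∨
    (∃ a b, u = pair a b) ∨ (∃ g v, u = val g v) := by
  have hu : PFunctor.M.mk (PFunctor.M.dest u) = u := PFunctor.M.mk_dest u
  rcases hd : PFunctor.M.dest u with ⟨s, f⟩
  rw [hd] at hu
  cases s with
  | bot => exact Or.inl (by rw [← hu]; exact mk_bot f)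
  | close => exact Or.inr (Or.inl (by rw [← hu]; exact mk_close f))
  | label k => exact Or.inr (Or.inr (Or.inl ⟨k, f (), by rw [← hu]; exact mk_label k f⟩))
  | pair => exact Or.inr (Or.inr (Or.inr (Or.inl ⟨f true, f false, by rw [← hu]; exact mk_pair f⟩)))
  | val g => exact Or.inr (Or.inr (Or.inr (Or.inr ⟨g, f (), by rw [← hu]; exact mk_val g f⟩)))

theorem trunc_succ_bot (n : ℕ) : trunc (n + 1) (bot : Comm V L) = bot := by
  rw [trunc, bot]; erw [PFunctor.M.dest_mk]

theorem trunc_succ_close (n : ℕ) : trunc (n + 1) (close : Comm V L) = close := by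
  rw [trunc, close]; erw [PFunctor.M.dest_mk]

theorem trunc_succ_label (n : ℕ) (k : L) (v : Comm V L) :
    trunc (n + 1) (label k v) = label k (trunc n v) := by
  rw [trunc, label]; erw [PFunctor.M.dest_mk]

theorem trunc_succ_pair (n : ℕ) (a b : Comm V L) :
    trunc (n + 1) (pair a b) = pair (trunc n a) (trunc n b) := by
  rw [trunc, pair]; erw [PFunctor.M.dest_mk]
  rfl

theorem trunc_succ_val (n : ℕ) (g : V) (v : Comm V L) :
    trunc (n + 1) (val g v) = val g (trunc n v) := by
  rw [trunc, val]; erw [PFunctor.M.dest_mk]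

theorem sim_bot (w : Comm V L) : Sim R bot w :=
  ⟨fun a _ => a = bot, fun _ _ h => Or.inl h, rfl⟩

theorem sim_destruct {u w : Comm V L} (h : Sim R u w) : SimStep R (Sim R) u w := by
  obtain ⟨S, hS, hu⟩ := h
  have hstep := hS _ _ hu
  have lift : ∀ a b, S a b → Sim R a b := fun a b h => ⟨S, hS, h⟩
  rcases hstep with h | h | ⟨k, v, v', h1, h2, h3⟩ | ⟨a, b, a', b', h1, h2, h3, h4⟩ |
      ⟨f, g, v, v', h1, h2, h3, h4⟩
  · exact Or.inl h
  · exact Or.inr (Or.inl h)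
  · exact Or.inr (Or.inr (Or.inl ⟨k, v, v', h1, h2, lift _ _ h3⟩))
  · exact Or.inr (Or.inr (Or.inr (Or.inl ⟨a, b, a', b', h1, h2, lift _ _ h3, lift _ _ h4⟩)))
  · exact Or.inr (Or.inr (Or.inr (Or.inr ⟨f, g, v, v', h1, h2, h3, lift _ _ h4⟩)))

theorem sim_of_step {u w : Comm V L} (h : SimStep R (Sim R) u w) : Sim R u w := by
  refine ⟨fun a b => SimStep R (Sim R) a b, fun a b hab => ?_, h⟩
  rcases hab with h | h | ⟨k, v, v', h1, h2, h3⟩ | ⟨a', b', a'', b'', h1, h2, h3, h4⟩ |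
      ⟨f, g, v, v', h1, h2, h3, h4⟩
  · exact Or.inl h
  · exact Or.inr (Or.inl h)
  · exact Or.inr (Or.inr (Or.inl ⟨k, v, v', h1, h2, sim_destruct h3⟩))
  · exact Or.inr (Or.inr (Or.inr (Or.inl ⟨a', b', a'', b'', h1, h2, sim_destruct h3, sim_destruct h4⟩)))
  · exact Or.inr (Or.inr (Or.inr (Or.inr ⟨f, g, v, v', h1, h2, h3, sim_destruct h4⟩)))

theorem sim_close_elim {w : Comm V L} (h : Sim R (close : Comm V L) w) : w = close := by
  rcases sim_destruct h with h | h | ⟨k, v, v', h1, _, _⟩ | ⟨a, b, a', b', h1, _, _, _⟩ |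
      ⟨f, g, v, v', h1, _, _, _⟩
  · exact nomatch (shape_of_eq h : (_ : CommShape V L) = _)
  · exact h.2
  · exact nomatch (shape_of_eq h1 : (_ : CommShape V L) = _)
  · exact nomatch (shape_of_eq h1 : (_ : CommShape V L) = _)
  · exact nomatch (shape_of_eq h1 : (_ : CommShape V L) = _)

theorem sim_label_elim {k : L} {v w : Comm V L} (h : Sim R (label k v) w) :
    ∃ v', w = label k v' ∧ Sim R v v' := by
  rcases sim_destruct h with h | h | ⟨k', v₁, v', h1, h2, h3⟩ | ⟨a, b, a', b', h1, _, _, _⟩ |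
      ⟨f, g, v₁, v', h1, _, _, _⟩
  · exact nomatch (shape_of_eq h : (_ : CommShape V L) = _)
  · exact nomatch (shape_of_eq h.1 : (_ : CommShape V L) = _)
  · obtain ⟨hk, hv⟩ := label_inj h1
    subst hk; subst hv
    exact ⟨v', h2, h3⟩
  · exact nomatch (shape_of_eq h1 : (_ : CommShape V L) = _)
  · exact nomatch (shape_of_eq h1 : (_ : CommShape V L) = _)

theorem sim_pair_elim {a b w : Comm V L} (h : Sim R (pair a b) w) :
    ∃ a' b', w = pair a' b' ∧ Sim R a a' ∧ Sim R b b' := by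
  rcases sim_destruct h with h | h | ⟨k, v, v', h1, _, _⟩ | ⟨a₁, b₁, a', b', h1, h2, h3, h4⟩ |
      ⟨f, g, v, v', h1, _, _, _⟩
  · exact nomatch (shape_of_eq h : (_ : CommShape V L) = _)
  · exact nomatch (shape_of_eq h.1 : (_ : CommShape V L) = _)
  · exact nomatch (shape_of_eq h1 : (_ : CommShape V L) = _)
  · obtain ⟨ha, hb⟩ := pair_inj h1
    subst ha; subst hb
    exact ⟨a', b', h2, h3, h4⟩
  · exact nomatch (shape_of_eq h1 : (_ : CommShape V L) = _)

theorem sim_val_elim {f : V} {v w : Comm V L} (h : Sim R (val f v) w) :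
    ∃ g v', w = val g v' ∧ R f g ∧ Sim R v v' := by
  rcases sim_destruct h with h | h | ⟨k, v₁, v', h1, _, _⟩ | ⟨a, b, a', b', h1, _, _, _⟩ |
      ⟨f₁, g, v₁, v', h1, h2, h3, h4⟩
  · exact nomatch (shape_of_eq h : (_ : CommShape V L) = _)
  · exact nomatch (shape_of_eq h.1 : (_ : CommShape V L) = _)
  · exact nomatch (shape_of_eq h1 : (_ : CommShape V L) = _)
  · exact nomatch (shape_of_eq h1 : (_ : CommShape V L) = _)
  · obtain ⟨hf, hv⟩ := val_inj h1
    subst hf; subst hv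
    exact ⟨g, v', h2, h3, h4⟩

theorem sim_trunc : ∀ n : ℕ, ∀ u w : Comm V L, Sim R u w → Sim R (trunc n u) w := by
  intro n
  induction n with
  | zero => intro u w _; exact sim_bot w
  | succ n ih =>
    intro u w h
    rcases cases' u with hu | hu | ⟨k, v, hu⟩ | ⟨a, b, hu⟩ | ⟨g, v, hu⟩ <;> subst hu
    · rw [trunc_succ_bot]; exact sim_bot w
    · rw [trunc_succ_close]; exact h
    · obtain ⟨v', hw, hs⟩ := sim_label_elim h
      rw [trunc_succ_label]
      exact sim_of_step (Or.inr (Or.inr (Or.inl ⟨k, trunc n v, v', rfl, hw, ih _ _ hs⟩)))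
    · obtain ⟨a', b', hw, hsa, hsb⟩ := sim_pair_elim h
      rw [trunc_succ_pair]
      exact sim_of_step (Or.inr (Or.inr (Or.inr (Or.inl
        ⟨trunc n a, trunc n b, a', b', rfl, hw, ih _ _ hsa, ih _ _ hsb⟩))))
    · obtain ⟨g', v', hw, hR, hs⟩ := sim_val_elim h
      rw [trunc_succ_val]
      exact sim_of_step (Or.inr (Or.inr (Or.inr (Or.inr
        ⟨g, g', trunc n v, v', rfl, hw, hR, ih _ _ hs⟩))))

theorem sim_of_trunc {u w : Comm V L} (h : ∀ n, Sim R (trunc n u) w) : Sim R u w := by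
  refine ⟨fun a b => ∀ n, Sim R (trunc n a) b, fun a b hab => ?_, h⟩
  rcases cases' a with ha | ha | ⟨k, v, ha⟩ | ⟨x, y, ha⟩ | ⟨g, v, ha⟩ <;> subst ha
  · exact Or.inl rfl
  · have h1 := hab 1
    rw [trunc_succ_close] at h1
    exact Or.inr (Or.inl ⟨rfl, sim_close_elim h1⟩)
  · have h1 := hab 1
    rw [trunc_succ_label] at h1
    obtain ⟨v', hw, _⟩ := sim_label_elim h1
    refine Or.inr (Or.inr (Or.inl ⟨k, v, v', rfl, hw, fun n => ?_⟩))
    have hn := hab (n + 1)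
    rw [trunc_succ_label] at hn
    obtain ⟨v'', hw', hs⟩ := sim_label_elim hn
    rw [hw] at hw'
    obtain ⟨_, hv⟩ := label_inj hw'
    rwa [hv]
  · have h1 := hab 1
    rw [trunc_succ_pair] at h1
    obtain ⟨a', b', hw, _, _⟩ := sim_pair_elim h1
    refine Or.inr (Or.inr (Or.inr (Or.inl ⟨x, y, a', b', rfl, hw, fun n => ?_, fun n => ?_⟩)))
    · have hn := hab (n + 1)
      rw [trunc_succ_pair] at hn
      obtain ⟨a'', b'', hw', hsa, _⟩ := sim_pair_elim hn
      rw [hw] at hw'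
      obtain ⟨hva, _⟩ := pair_inj hw'
      rwa [hva]
    · have hn := hab (n + 1)
      rw [trunc_succ_pair] at hn
      obtain ⟨a'', b'', hw', _, hsb⟩ := sim_pair_elim hn
      rw [hw] at hw'
      obtain ⟨_, hvb⟩ := pair_inj hw'
      rwa [hvb]
  · have h1 := hab 1
    rw [trunc_succ_val] at h1
    obtain ⟨g', v', hw, hR, _⟩ := sim_val_elim h1
    refine Or.inr (Or.inr (Or.inr (Or.inr ⟨g, g', v, v', rfl, hw, hR, fun n => ?_⟩)))
    have hn := hab (n + 1)
    rw [trunc_succ_val] at hn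
    obtain ⟨g'', v'', hw', _, hs⟩ := sim_val_elim hn
    rw [hw] at hw'
    obtain ⟨_, hv⟩ := val_inj hw'
    rwa [hv]

end Comm

/-- Simulation is determined by all finite truncations of the left-hand side. -/
theorem stmt_13 {V L : Type} (R : V → V → Prop) (u w : Comm V L) :
    Comm.Sim R u w ↔ ∀ n : ℕ, Comm.Sim R (Comm.trunc n u) w :=
  ⟨fun h n => Comm.sim_trunc n u w h, Comm.sim_of_trunc⟩
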